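/- Roth's orthogonality estimate: for the dual function F = Σ_{r ∈ ℕ^d, |r| = n} f_r, where each f_r is an r-function, one has ‖F‖₂² = #{r ∈ ℕ^d : |r| = n} = C(n+d-1, d-1); in particular ‖F‖₂ ≲_d n^{(d-1)/2}. -/

import Mathlib

open MeasureTheory Finset

noncomputable section

/-- The dyadic interval `[k/2^m, (k+1)/2^m)`. -/
def dyadI (m k : ℕ) : Set ℝ := Set.Ico ((k : ℝ) / 2 ^ m) (((k : ℝ) + 1) / 2 ^ m)

/-- The `L^∞`-normalized Haar function of the dyadic interval `dyadI m k`: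
`-1` on the left half, `+1` on the right half, `0` elsewhere. -/
def haar (m k : ℕ) : ℝ → ℝ :=
  (dyadI (m + 1) (2 * k + 1)).indicator (fun _ => (1 : ℝ))
    - (dyadI (m + 1) (2 * k)).indicator (fun _ => (1 : ℝ))

/-- The Haar function of the dyadic box with side lengths `2^{-r i}` and positions `k i`. -/
def haarBox {d : ℕ} (r k : Fin d → ℕ) : (Fin d → ℝ) → ℝ :=
  fun x => ∏ i, haar (r i) (k i) (x i)

/-- The unit cube `[0,1)^d`. -/
def unitCube (d : ℕ) : Set (Fin d → ℝ) := Set.univ.pi fun _ => Set.Ico (0 : ℝ) 1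

/-- Index set for positions of dyadic boxes of level vector `r`. -/
def boxIdx (d : ℕ) (r : Fin d → ℕ) : Finset (Fin d → ℕ) :=
  Fintype.piFinset fun i => Finset.range (2 ^ r i)

/-- The level vectors `r ∈ ℕ^d` with `|r| = r₁ + ⋯ + r_d = n`. -/
def levIdx (d n : ℕ) : Finset (Fin d → ℕ) :=
  (Fintype.piFinset fun _ : Fin d => Finset.range (n + 1)).filter fun r => ∑ i, r i = n


lemma haar_apply (m k : ℕ) (x : ℝ) :
    haar m k x = (dyadI (m + 1) (2 * k + 1)).indicator (fun _ => (1 : ℝ)) x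
      - (dyadI (m + 1) (2 * k)).indicator (fun _ => (1 : ℝ)) x := rfl

lemma dyad_disj {m k k' : ℕ} (h : k ≠ k') {x : ℝ} (h1 : x ∈ dyadI m k)
    (h2 : x ∈ dyadI m k') : False := by
  have h2m : (0:ℝ) < 2 ^ m := by positivity
  rcases Nat.lt_or_ge k k' with hlt | hge
  · have : ((k:ℝ) + 1) / 2 ^ m ≤ (k' : ℝ) / 2 ^ m := by
      gcongr
      exact_mod_cast hlt
    exact absurd (lt_of_lt_of_le h1.2 (this.trans h2.1)) (lt_irrefl x)
  · have hlt : k' < k := lt_of_le_of_ne hge (Ne.symm h)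
    have : ((k':ℝ) + 1) / 2 ^ m ≤ (k : ℝ) / 2 ^ m := by
      gcongr
      exact_mod_cast hlt
    exact absurd (lt_of_lt_of_le h2.2 (this.trans h1.1)) (lt_irrefl x)

lemma dyadI_subset (m t k : ℕ) : dyadI (m + t) k ⊆ dyadI m (k / 2 ^ t) := by
  intro x hx
  have h2m : (0:ℝ) < 2 ^ m := by positivity
  have h2t : (0:ℕ) < 2 ^ t := Nat.pow_pos (by norm_num)
  have hdm : Nat.div_add_mod k (2 ^ t) = _ := rfl
  constructor
  · have h1 : ((k / 2 ^ t : ℕ) : ℝ) * 2 ^ t ≤ (k : ℝ) := by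
      exact_mod_cast Nat.div_mul_le_self k (2 ^ t)
    have : ((k / 2 ^ t : ℕ) : ℝ) / 2 ^ m ≤ (k : ℝ) / 2 ^ (m + t) := by
      rw [pow_add, div_le_div_iff₀ h2m (by positivity)]
      calc ((k / 2 ^ t : ℕ) : ℝ) * (2 ^ m * 2 ^ t) = ((k / 2 ^ t : ℕ) : ℝ) * 2 ^ t * 2 ^ m := by ring
        _ ≤ (k:ℝ) * 2 ^ m := by gcongr
    exact this.trans hx.1
  · have h1 : (k : ℕ) + 1 ≤ (k / 2 ^ t + 1) * 2 ^ t := by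
      rw [add_mul, one_mul]
      have hdm := Nat.div_add_mod k (2 ^ t)
      have hml := Nat.mod_lt k h2t
      rw [mul_comm] at hdm
      omega
    have : ((k:ℝ) + 1) / 2 ^ (m + t) ≤ (((k / 2 ^ t : ℕ) : ℝ) + 1) / 2 ^ m := by
      rw [pow_add, div_le_div_iff₀ (by positivity) h2m]
      calc ((k:ℝ) + 1) * 2 ^ m ≤ (((k / 2 ^ t : ℕ) : ℝ) + 1) * 2 ^ t * 2 ^ m := by
            gcongr
            exact_mod_cast h1
        _ = (((k / 2 ^ t : ℕ) : ℝ) + 1) * (2 ^ m * 2 ^ t) := by ring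
    exact lt_of_lt_of_le hx.2 this

lemma haar_support {m k : ℕ} {x : ℝ} (h : haar m k x ≠ 0) : x ∈ dyadI m k := by
  by_contra hx
  apply h
  rw [haar_apply]
  have h1 : x ∉ dyadI (m + 1) (2 * k + 1) := fun hmem => by
    have := dyadI_subset m 1 (2 * k + 1) hmem
    rw [show (2 * k + 1) / 2 ^ 1 = k by omega] at this
    exact hx this
  have h2 : x ∉ dyadI (m + 1) (2 * k) := fun hmem => by
    have := dyadI_subset m 1 (2 * k) hmem
    rw [show (2 * k) / 2 ^ 1 = k by omega] at this
    exact hx this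
  rw [Set.indicator_of_notMem h1, Set.indicator_of_notMem h2, sub_zero]

lemma haar_eq_one {m k : ℕ} {x : ℝ} (h : x ∈ dyadI (m + 1) (2 * k + 1)) :
    haar m k x = 1 := by
  have h2 : x ∉ dyadI (m + 1) (2 * k) := fun h2 => dyad_disj (by omega) h h2
  rw [haar_apply, Set.indicator_of_mem h, Set.indicator_of_notMem h2, sub_zero]

lemma haar_eq_neg_one {m k : ℕ} {x : ℝ} (h : x ∈ dyadI (m + 1) (2 * k)) :
    haar m k x = -1 := by
  have h2 : x ∉ dyadI (m + 1) (2 * k + 1) := fun h2 => dyad_disj (by omega) h h2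
  rw [haar_apply, Set.indicator_of_notMem h2, Set.indicator_of_mem h, zero_sub]

lemma haar_bound (m k : ℕ) (x : ℝ) : ‖haar m k x‖ ≤ 1 := by
  classical
  rw [haar_apply, Real.norm_eq_abs, Set.indicator_apply, Set.indicator_apply]
  split_ifs with h1 h2 h2
  · exact absurd h1 (fun h => dyad_disj (by omega) h h2)
  all_goals norm_num

lemma volume_dyadI (m k : ℕ) : volume (dyadI m k) = ENNReal.ofReal (1 / 2 ^ m) := by
  rw [dyadI, Real.volume_Ico]
  congr 1
  have h2m : (0:ℝ) < 2 ^ m := by positivity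
  field_simp
  ring

lemma measurableSet_dyadI (m k : ℕ) : MeasurableSet (dyadI m k) := measurableSet_Ico

lemma integrable_indicator_dyadI (m k : ℕ) :
    Integrable ((dyadI m k).indicator (fun _ => (1 : ℝ))) := by
  rw [integrable_indicator_iff (measurableSet_dyadI m k)]
  refine (integrableOn_const_iff).mpr (Or.inr ?_)
  rw [volume_dyadI]
  exact ENNReal.ofReal_lt_top

lemma integral_indicator_dyadI (m k : ℕ) :
    ∫ x, (dyadI m k).indicator (fun _ => (1 : ℝ)) x = 1 / 2 ^ m := by
  rw [integral_indicator (measurableSet_dyadI m k), setIntegral_const, measureReal_def, volume_dyadI]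
  rw [smul_eq_mul, mul_one, ENNReal.toReal_ofReal (by positivity)]

lemma integrable_haar (m k : ℕ) : Integrable (haar m k) := by
  have : haar m k = fun x => (dyadI (m + 1) (2 * k + 1)).indicator (fun _ => (1 : ℝ)) x
      - (dyadI (m + 1) (2 * k)).indicator (fun _ => (1 : ℝ)) x := rfl
  rw [this]
  exact (integrable_indicator_dyadI _ _).sub (integrable_indicator_dyadI _ _)

lemma measurable_haar (m k : ℕ) : Measurable (haar m k) := by
  have : haar m k = fun x => (dyadI (m + 1) (2 * k + 1)).indicator (fun _ => (1 : ℝ)) x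
      - (dyadI (m + 1) (2 * k)).indicator (fun _ => (1 : ℝ)) x := rfl
  rw [this]
  exact ((measurable_const.indicator (measurableSet_dyadI _ _)).sub
    (measurable_const.indicator (measurableSet_dyadI _ _)))

lemma integral_haar (m k : ℕ) : ∫ x, haar m k x = 0 := by
  simp_rw [haar_apply]
  rw [integral_sub (integrable_indicator_dyadI _ _) (integrable_indicator_dyadI _ _),
    integral_indicator_dyadI, integral_indicator_dyadI, sub_self]

lemma integrable_haar_mul (m k m' k' : ℕ) :
    Integrable (fun x => haar m k x * haar m' k' x) :=
  (integrable_haar m' k').bdd_mul (measurable_haar m k).aestronglyMeasurable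
    (Filter.Eventually.of_forall (haar_bound m k))

lemma integral_haar_mul_self (m k : ℕ) :
    ∫ x, haar m k x * haar m k x = 1 / 2 ^ m := by
  have hpt : ∀ x, haar m k x * haar m k x
      = (dyadI (m + 1) (2 * k + 1)).indicator (fun _ => (1 : ℝ)) x
        + (dyadI (m + 1) (2 * k)).indicator (fun _ => (1 : ℝ)) x := by
    intro x
    classical
    rw [haar_apply, Set.indicator_apply, Set.indicator_apply]
    split_ifs with h1 h2 h2
    · exact absurd h1 (fun h => dyad_disj (by omega) h h2)
    all_goals ring
  simp_rw [hpt]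
  rw [integral_add (integrable_indicator_dyadI _ _) (integrable_indicator_dyadI _ _),
    integral_indicator_dyadI, integral_indicator_dyadI, pow_succ]
  ring

lemma haar_const_on (m k j : ℕ) : ∃ c : ℝ, ∀ x ∈ dyadI (m + 1) j, haar m k x = c := by
  rcases eq_or_ne j (2 * k + 1) with rfl | h1
  · exact ⟨1, fun x hx => haar_eq_one hx⟩
  rcases eq_or_ne j (2 * k) with rfl | h2
  · exact ⟨-1, fun x hx => haar_eq_neg_one hx⟩
  · refine ⟨0, fun x hx => ?_⟩
    rw [haar_apply, Set.indicator_of_notMem (fun h => dyad_disj h1 hx h),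
      Set.indicator_of_notMem (fun h => dyad_disj h2 hx h), sub_zero]

lemma integral_haar_mul_of_lt {m m' : ℕ} (k k' : ℕ) (h : m < m') :
    ∫ x, haar m k x * haar m' k' x = 0 := by
  obtain ⟨c, hc⟩ := haar_const_on m k (k' / 2 ^ (m' - (m + 1)))
  have hsub : dyadI m' k' ⊆ dyadI (m + 1) (k' / 2 ^ (m' - (m + 1))) := by
    have h' := dyadI_subset (m + 1) (m' - (m + 1)) k'
    rwa [show m + 1 + (m' - (m + 1)) = m' by omega] at h'
  have hpt : ∀ x, haar m k x * haar m' k' x = c * haar m' k' x := by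
    intro x
    by_cases hx : haar m' k' x = 0
    · rw [hx, mul_zero, mul_zero]
    · rw [hc x (hsub (haar_support hx))]
  simp_rw [hpt]
  rw [integral_const_mul, integral_haar, mul_zero]

lemma integral_haar_mul_ne {m k m' k' : ℕ} (h : m ≠ m' ∨ k ≠ k') :
    ∫ x, haar m k x * haar m' k' x = 0 := by
  rcases Nat.lt_trichotomy m m' with hlt | heq | hgt
  · exact integral_haar_mul_of_lt k k' hlt
  · subst heq
    have hk : k ≠ k' := h.resolve_left (fun h => h rfl)
    have hpt : ∀ x, haar m k x * haar m k' x = 0 := by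
      intro x
      by_cases h1 : haar m k x = 0
      · rw [h1, zero_mul]
      by_cases h2 : haar m k' x = 0
      · rw [h2, mul_zero]
      exact absurd (dyad_disj hk (haar_support h1) (haar_support h2)) id
    simp_rw [hpt]
    exact integral_zero ℝ ℝ
  · rw [show (fun x => haar m k x * haar m' k' x) = (fun x => haar m' k' x * haar m k x)
      from funext fun x => mul_comm _ _]
    exact integral_haar_mul_of_lt k' k hgt

lemma dyadI_subset_Ico {m k : ℕ} (hk : k < 2 ^ m) : dyadI m k ⊆ Set.Ico (0:ℝ) 1 := by
  intro x hx
  have h2m : (0:ℝ) < 2 ^ m := by positivity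
  refine ⟨le_trans (by positivity) hx.1, lt_of_lt_of_le hx.2 ?_⟩
  rw [div_le_one h2m]
  exact_mod_cast hk



lemma box_mul_box {d : ℕ} (r k r' k' : Fin d → ℕ) (x : Fin d → ℝ) :
    haarBox r k x * haarBox r' k' x
      = ∏ i, (haar (r i) (k i) (x i) * haar (r' i) (k' i) (x i)) := by
  rw [haarBox, haarBox, ← Finset.prod_mul_distrib]

lemma integrable_box_mul {d : ℕ} (r k r' k' : Fin d → ℕ) :
    Integrable (fun x : Fin d → ℝ => haarBox r k x * haarBox r' k' x) := by
  simp_rw [box_mul_box]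
  exact Integrable.fintype_prod (fun i => integrable_haar_mul (r i) (k i) (r' i) (k' i))

lemma integral_box_mul {d : ℕ} (r k r' k' : Fin d → ℕ) :
    ∫ x : Fin d → ℝ, haarBox r k x * haarBox r' k' x
      = ∏ i, ∫ t : ℝ, haar (r i) (k i) t * haar (r' i) (k' i) t := by
  simp_rw [box_mul_box]
  exact MeasureTheory.integral_fintype_prod_eq_prod
    (fun i t => haar (r i) (k i) t * haar (r' i) (k' i) t)

lemma integral_box_mul_self {d : ℕ} (r k : Fin d → ℕ) :
    ∫ x : Fin d → ℝ, haarBox r k x * haarBox r k x = 1 / 2 ^ (∑ i, r i) := by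
  rw [integral_box_mul]
  calc (∏ i, ∫ t : ℝ, haar (r i) (k i) t * haar (r i) (k i) t)
      = ∏ i, (1 / 2 ^ (r i) : ℝ) := by
        exact Finset.prod_congr rfl fun i _ => integral_haar_mul_self (r i) (k i)
    _ = 1 / 2 ^ (∑ i, r i) := by
        rw [← Finset.prod_pow_eq_pow_sum]
        simp [one_div, ← Finset.prod_inv_distrib]

lemma integral_box_mul_ne {d : ℕ} {r k r' k' : Fin d → ℕ} {i : Fin d}
    (h : r i ≠ r' i ∨ k i ≠ k' i) :
    ∫ x : Fin d → ℝ, haarBox r k x * haarBox r' k' x = 0 := by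
  rw [integral_box_mul]
  exact Finset.prod_eq_zero (Finset.mem_univ i) (integral_haar_mul_ne h)

lemma mem_levIdx {d n : ℕ} {r : Fin d → ℕ} : r ∈ levIdx d n ↔ ∑ i, r i = n := by
  rw [levIdx, Finset.mem_filter, Fintype.mem_piFinset]
  constructor
  · exact fun h => h.2
  · intro h
    refine ⟨fun i => Finset.mem_range.2 (Nat.lt_succ_of_le ?_), h⟩
    exact h ▸ Finset.single_le_sum (f := r) (fun _ _ => Nat.zero_le _) (Finset.mem_univ i)

lemma haarBox_zero {d : ℕ} {r k : Fin d → ℕ} (hk : k ∈ boxIdx d r)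
    {x : Fin d → ℝ} (hx : x ∉ unitCube d) : haarBox r k x = 0 := by
  rw [unitCube, Set.mem_pi] at hx
  push_neg at hx
  obtain ⟨i, _, hi⟩ := hx
  refine Finset.prod_eq_zero (Finset.mem_univ i) ?_
  by_contra h
  rw [boxIdx, Fintype.mem_piFinset] at hk
  exact hi (dyadI_subset_Ico (Finset.mem_range.1 (hk i)) (haar_support h))



lemma card_boxIdx {d : ℕ} (r : Fin d → ℕ) : (boxIdx d r).card = 2 ^ (∑ i, r i) := by
  rw [boxIdx, Fintype.card_piFinset]
  simp only [Finset.card_range]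
  rw [Finset.prod_pow_eq_pow_sum]

lemma card_levIdx {d : ℕ} (hd : 1 ≤ d) (n : ℕ) :
    (levIdx d n).card = (n + d - 1).choose (d - 1) := by
  classical
  have e1 : d + n - 1 = (d - 1) + n := by omega
  have e2 : n + d - 1 = (d - 1) + n := by omega
  have h1 : (levIdx d n).card = Nat.card {P : Fin d → ℕ // ∑ i, P i = n} := by
    rw [← Nat.card_eq_finsetCard]
    exact Nat.card_congr (Equiv.subtypeEquivRight fun r => mem_levIdx)
  have h2 : Nat.card {P : Fin d → ℕ // ∑ i, P i = n} = Nat.card (Sym (Fin d) n) :=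
    (Nat.card_congr (Sym.equivNatSumOfFintype (Fin d) n)).symm
  rw [h1, h2, Nat.card_eq_fintype_card, Sym.card_sym_eq_choose, Fintype.card_fin,
    e1, e2, Nat.choose_symm_add]


/-- Roth's orthogonality estimate: the dual function `F = Σ_{|r|=n} f_r` (each `f_r` an
`r`-function) satisfies `‖F‖₂² = #{r : |r| = n} = C(n+d-1, d-1)`; in particular
`‖F‖₂ ≤ C_d n^{(d-1)/2}`. -/
theorem stmt_10 (d : ℕ) (hd : 2 ≤ d) :
    ∃ C : ℝ, 0 < C ∧ ∀ n : ℕ, 1 ≤ n →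
      ∀ (ε : (Fin d → ℕ) → (Fin d → ℕ) → ℝ),
        (∀ r ∈ levIdx d n, ∀ k ∈ boxIdx d r, ε r k = 1 ∨ ε r k = -1) →
        ∀ F : (Fin d → ℝ) → ℝ,
          (∀ x, F x = ∑ r ∈ levIdx d n, ∑ k ∈ boxIdx d r, ε r k * haarBox r k x) →
          (∫ x in unitCube d, (F x) ^ 2 = ((levIdx d n).card : ℝ)) ∧
          (levIdx d n).card = (n + d - 1).choose (d - 1) ∧
          Real.sqrt (∫ x in unitCube d, (F x) ^ 2)
            ≤ C * (n : ℝ) ^ (((d : ℝ) - 1) / 2) := by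
  classical
  have hd0 : (0:ℝ) < (d:ℝ) := by exact_mod_cast (by omega : 0 < d)
  refine ⟨Real.sqrt ((d:ℝ) ^ (d - 1)), Real.sqrt_pos.2 (pow_pos hd0 _), ?_⟩
  intro n hn ε hε F hF
  set S : Finset (Σ _ : Fin d → ℕ, Fin d → ℕ) := (levIdx d n).sigma (fun r => boxIdx d r)
    with hS
  have hF' : ∀ x, F x = ∑ p ∈ S, ε p.1 p.2 * haarBox p.1 p.2 x := by
    intro x
    rw [hF x, hS, Finset.sum_sigma]
  have hterm : ∀ p q : (Σ _ : Fin d → ℕ, Fin d → ℕ),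
      Integrable (fun x : Fin d → ℝ =>
        (ε p.1 p.2 * ε q.1 q.2) * (haarBox p.1 p.2 x * haarBox q.1 q.2 x)) :=
    fun p q => (integrable_box_mul _ _ _ _).const_mul _
  have hzero : ∀ p q : (Σ _ : Fin d → ℕ, Fin d → ℕ), p ≠ q →
      ∫ x : Fin d → ℝ, haarBox p.1 p.2 x * haarBox q.1 q.2 x = 0 := by
    intro p q hne
    by_cases h1 : p.1 = q.1
    · have h2 : p.2 ≠ q.2 := fun h2 => hne (Sigma.ext h1 (heq_of_eq h2))
      obtain ⟨i, hi⟩ := Function.ne_iff.1 h2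
      exact integral_box_mul_ne (Or.inr hi)
    · obtain ⟨i, hi⟩ := Function.ne_iff.1 h1
      exact integral_box_mul_ne (Or.inl hi)
  have hdiag : ∀ p ∈ S, ∫ x : Fin d → ℝ, haarBox p.1 p.2 x * haarBox p.1 p.2 x
      = 1 / 2 ^ n := by
    intro p hp
    rw [hS, Finset.mem_sigma] at hp
    rw [integral_box_mul_self, mem_levIdx.1 hp.1]
  have key : ∫ x in unitCube d, (F x) ^ 2 = ((levIdx d n).card : ℝ) := by
    have hout : ∀ x ∉ unitCube d, (F x) ^ 2 = 0 := by
      intro x hx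
      have : F x = 0 := by
        rw [hF x]
        exact Finset.sum_eq_zero fun r _ => Finset.sum_eq_zero fun k hk => by
          rw [haarBox_zero hk hx, mul_zero]
      rw [this]; norm_num
    rw [setIntegral_eq_integral_of_forall_compl_eq_zero hout]
    have hsq : ∀ x, (F x) ^ 2 = ∑ p ∈ S, ∑ q ∈ S,
        (ε p.1 p.2 * ε q.1 q.2) * (haarBox p.1 p.2 x * haarBox q.1 q.2 x) := by
      intro x
      rw [sq, hF' x, Finset.sum_mul_sum]
      exact Finset.sum_congr rfl fun p _ => Finset.sum_congr rfl fun q _ => by ring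
    simp_rw [hsq]
    rw [integral_finset_sum S (fun p _ => integrable_finset_sum S (fun q _ => hterm p q))]
    have hcardS : (S.card : ℝ) = ((levIdx d n).card : ℝ) * 2 ^ n := by
      rw [hS, Finset.card_sigma]
      push_cast
      rw [Finset.sum_congr rfl (fun r hr => by
        rw [card_boxIdx, mem_levIdx.1 hr])]
      rw [Finset.sum_const, nsmul_eq_mul]
      push_cast
      ring
    calc ∑ p ∈ S, ∫ x : Fin d → ℝ, ∑ q ∈ S,
          (ε p.1 p.2 * ε q.1 q.2) * (haarBox p.1 p.2 x * haarBox q.1 q.2 x)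
        = ∑ p ∈ S, ∑ q ∈ S, ∫ x : Fin d → ℝ,
            (ε p.1 p.2 * ε q.1 q.2) * (haarBox p.1 p.2 x * haarBox q.1 q.2 x) :=
          Finset.sum_congr rfl fun p _ => integral_finset_sum S (fun q _ => hterm p q)
      _ = ∑ _p ∈ S, (1 / 2 ^ n : ℝ) := by
          refine Finset.sum_congr rfl fun p hp => ?_
          rw [Finset.sum_eq_single_of_mem p hp]
          · rw [integral_const_mul, hdiag p hp]
            have hpS := hp
            rw [hS, Finset.mem_sigma] at hpS
            rcases hε p.1 hpS.1 p.2 hpS.2 with h | h <;> rw [h] <;> norm_num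
          · intro q hq hne
            rw [integral_const_mul, hzero p q (Ne.symm hne), mul_zero]
      _ = (S.card : ℝ) * (1 / 2 ^ n) := by rw [Finset.sum_const, nsmul_eq_mul]
      _ = ((levIdx d n).card : ℝ) := by
          rw [hcardS]
          have : (2:ℝ) ^ n ≠ 0 := by positivity
          field_simp
  have hcard : (levIdx d n).card = (n + d - 1).choose (d - 1) :=
    card_levIdx (by omega) n
  refine ⟨key, hcard, ?_⟩
  rw [key]
  have hnat : (levIdx d n).card ≤ (d * n) ^ (d - 1) := by
    rw [hcard]
    calc (n + d - 1).choose (d - 1) ≤ (n + d - 1) ^ (d - 1) := Nat.choose_le_pow _ _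
      _ ≤ (d * n) ^ (d - 1) := by
          refine Nat.pow_le_pow_left ?_ _
          obtain ⟨m, rfl⟩ : ∃ m, n = m + 1 := ⟨n - 1, by omega⟩
          have h := Nat.le_mul_of_pos_left m (show 0 < d by omega)
          rw [Nat.mul_add, Nat.mul_one]
          omega
  have h1 : ((levIdx d n).card : ℝ) ≤ (d:ℝ) ^ (d - 1) * (n:ℝ) ^ (d - 1) := by
    calc ((levIdx d n).card : ℝ) ≤ (((d * n) ^ (d - 1) : ℕ) : ℝ) := by exact_mod_cast hnat
      _ = (d:ℝ) ^ (d - 1) * (n:ℝ) ^ (d - 1) := by push_cast; rw [mul_pow]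
  have hn0 : (0:ℝ) ≤ (n:ℝ) := Nat.cast_nonneg n
  calc Real.sqrt ((levIdx d n).card : ℝ)
      ≤ Real.sqrt ((d:ℝ) ^ (d - 1) * (n:ℝ) ^ (d - 1)) := Real.sqrt_le_sqrt h1
    _ = Real.sqrt ((d:ℝ) ^ (d - 1)) * Real.sqrt ((n:ℝ) ^ (d - 1)) :=
        Real.sqrt_mul (by positivity) _
    _ = Real.sqrt ((d:ℝ) ^ (d - 1)) * (n:ℝ) ^ (((d:ℝ) - 1) / 2) := by
        congr 1
        rw [← Real.rpow_natCast (n:ℝ) (d - 1), Real.sqrt_eq_rpow,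
          ← Real.rpow_mul hn0]
        congr 1
        rw [Nat.cast_sub (by omega : 1 ≤ d), Nat.cast_one]
        ring
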